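/- Backward–forward identity: if x ∈ R_fin and there is y ∈ R_0 with f_I^[k](y) = x for some k, then there exist ε_1,...,ε_n ∈ {0,1} with Σ_{i=1}^n ε_i·A_i = B; consequently the configuration c = (1,0,ε_1,...,ε_n) satisfies f_I^[k](⟨c⟩) ∈ R_fin. -/

import Mathlib

noncomputable section

def pp (n : ℕ) : ℕ := Nat.clog 2 (n + 2)
def ww (B : ℕ) : ℕ := Nat.clog 2 (B + 2)
def qq (n B : ℕ) : ℕ := pp n + ww B + 1

def tp (n : ℕ) : ℝ := (2 : ℝ) ^ (-(pp n : ℤ))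
def tp1 (n : ℕ) : ℝ := (2 : ℝ) ^ (-(pp n : ℤ) - 1)
def tq (n B : ℕ) : ℝ := (2 : ℝ) ^ (-(qq n B : ℤ))
def bI (k : ℤ) : ℝ := (5 : ℝ) ^ (-k)

def TI (n B : ℕ) (A : ℕ → ℕ) (c : ℕ × ℕ × (ℕ → ℕ)) : ℕ × ℕ × (ℕ → ℕ) :=
  if c.1 = n + 1 then c
  else (c.1 + 1, min (B + 1) (c.2.1 + c.2.2 c.1 * A c.1), c.2.2)

def enc (n B : ℕ) (c : ℕ × ℕ × (ℕ → ℕ)) : ℝ × ℝ :=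
  ((c.1 : ℝ) * tp n + (c.2.1 : ℝ) * tq n B,
   bI ((n : ℤ) + 1) + ∑ j ∈ Finset.Icc c.1 n, ((3 * c.2.2 j + 1 : ℕ) : ℝ) * bI (j : ℤ))

def inR0 (n : ℕ) (x : ℝ × ℝ) : Prop :=
  0 ≤ x.1 ∧ x.1 ≤ tp1 n ∧ 0 ≤ x.2 ∧ x.2 ≤ 1

def inRi (n i : ℕ) (x : ℝ × ℝ) : Prop :=
  (i : ℝ) * tp n ≤ x.1 ∧ x.1 ≤ (i : ℝ) * tp n + tp1 n ∧ 0 ≤ x.2 ∧ x.2 ≤ bI ((i : ℤ) - 1)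

def inRia (n i α : ℕ) (x : ℝ × ℝ) : Prop :=
  (i : ℝ) * tp n ≤ x.1 ∧ x.1 ≤ (i : ℝ) * tp n + tp1 n ∧
    (α : ℝ) * bI (i : ℤ) ≤ x.2 ∧ x.2 ≤ ((α : ℝ) + 1) * bI (i : ℤ)

def in4lin (n B : ℕ) (A : ℕ → ℕ) (i : ℕ) (x : ℝ × ℝ) : Prop :=
  inRia n i 4 x ∧ x.1 ≤ (i : ℝ) * tp n + ((B : ℝ) + 1 - (A i : ℝ)) * tq n B

def in4sat (n B : ℕ) (A : ℕ → ℕ) (i : ℕ) (x : ℝ × ℝ) : Prop :=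
  inRia n i 4 x ∧ (i : ℝ) * tp n + ((B : ℝ) + 1 - (A i : ℝ)) * tq n B ≤ x.1

def in3lin (n B : ℕ) (A : ℕ → ℕ) (i : ℕ) (x : ℝ × ℝ) : Prop :=
  inRia n i 3 x ∧
    (x.2 * (5 : ℝ) ^ (i : ℤ) - 3) * (tp1 n - ((B : ℝ) + 1 - (A i : ℝ)) * tq n B) ≤
      tp1 n + (i : ℝ) * tp n - x.1

def in3sat (n B : ℕ) (A : ℕ → ℕ) (i : ℕ) (x : ℝ × ℝ) : Prop :=
  inRia n i 3 x ∧
    tp1 n + (i : ℝ) * tp n - x.1 ≤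
      (x.2 * (5 : ℝ) ^ (i : ℤ) - 3) * (tp1 n - ((B : ℝ) + 1 - (A i : ℝ)) * tq n B)

open scoped Classical in
def fI (n B : ℕ) (A : ℕ → ℕ) (x : ℝ × ℝ) : ℝ × ℝ :=
  if inR0 n x then (tp n, x.2)
  else if inRi n (n + 1) x then x
  else if _h : ∃ i, 1 ≤ i ∧ i ≤ n ∧ inRia n i 0 x then (x.1 + tp n, 0)
  else if h : ∃ i, 1 ≤ i ∧ i ≤ n ∧ inRia n i 1 x then
    (x.1 + tp n, x.2 - bI (h.choose : ℤ))
  else if h : ∃ i, 1 ≤ i ∧ i ≤ n ∧ inRia n i 2 x then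
    (x.1 + tp n, 3 * bI (h.choose : ℤ) - x.2)
  else if h : ∃ i, 1 ≤ i ∧ i ≤ n ∧ in3lin n B A i x then
    (x.1 + tp n + (A h.choose : ℝ) * tq n B * (x.2 * (5 : ℝ) ^ (h.choose : ℤ) - 3), 0)
  else if h : ∃ i, 1 ≤ i ∧ i ≤ n ∧ in3sat n B A i x then
    (((h.choose : ℝ) + 3 / 2) * tp n -
      (x.2 * (5 : ℝ) ^ (h.choose : ℤ) - 3) * (tp1 n - ((B : ℝ) + 1) * tq n B), 0)
  else if h : ∃ i, 1 ≤ i ∧ i ≤ n ∧ in4lin n B A i x then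
    (x.1 + tp n + (A h.choose : ℝ) * tq n B, x.2 - 4 * bI (h.choose : ℤ))
  else if h : ∃ i, 1 ≤ i ∧ i ≤ n ∧ in4sat n B A i x then
    (((h.choose : ℝ) + 1) * tp n + ((B : ℝ) + 1) * tq n B, x.2 - 4 * bI (h.choose : ℤ))
  else x

def inRfin (n B : ℕ) (x : ℝ × ℝ) : Prop :=
  ((n : ℝ) + 1) * tp n + (B : ℝ) * tq n B - (2 : ℝ) ^ (-(qq n B : ℤ) - 1) ≤ x.1 ∧
  x.1 ≤ ((n : ℝ) + 1) * tp n + (B : ℝ) * tq n B ∧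
  bI ((n : ℤ) + 1) ≤ x.2 ∧ x.2 ≤ 2 * bI ((n : ℤ) + 1)

end

-- AUX1: numeric basics
noncomputable section AuxNum
open Finset

lemma tp_pos (n : ℕ) : 0 < tp n := zpow_pos (by norm_num) _
lemma tp1_pos (n : ℕ) : 0 < tp1 n := zpow_pos (by norm_num) _
lemma tq_pos (n B : ℕ) : 0 < tq n B := zpow_pos (by norm_num) _
lemma tp1_half (n : ℕ) : tp1 n = tp n / 2 := by
  unfold tp1 tp
  rw [zpow_sub₀ (by norm_num : (2:ℝ) ≠ 0)]
  norm_num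
lemma bI_pos (k : ℤ) : 0 < bI k := zpow_pos (by norm_num) _
lemma bI_step (k : ℤ) : bI k = 5 * bI (k+1) := by
  unfold bI
  rw [show -k = 1 + (-(k+1)) by ring, zpow_add₀ (by norm_num : (5:ℝ) ≠ 0)]
  norm_num
lemma bI_mul_pow (k : ℤ) : bI k * (5:ℝ)^k = 1 := by
  unfold bI; rw [← zpow_add₀ (by norm_num : (5:ℝ) ≠ 0)]; norm_num
lemma pow5_pos (k : ℤ) : (0:ℝ) < 5^k := zpow_pos (by norm_num) _

lemma B1_tq (n B : ℕ) : ((B:ℝ)+1) * tq n B ≤ tp1 n := by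
  have h2 : (B:ℝ)+2 ≤ 2^(ww B) := by exact_mod_cast Nat.le_pow_clog (by norm_num) (B+2)
  have hw : (0:ℝ) < 2^(ww B) := by positivity
  have hq : tq n B = tp1 n * ((2:ℝ)^(ww B))⁻¹ := by
    unfold tq tp1 qq
    rw [← zpow_natCast (2:ℝ) (ww B), ← zpow_neg, ← zpow_add₀ (by norm_num : (2:ℝ)≠0)]
    congr 1
  rw [hq]
  rw [show ((B:ℝ)+1) * (tp1 n * ((2:ℝ)^(ww B))⁻¹) = (((B:ℝ)+1) * ((2:ℝ)^(ww B))⁻¹) * tp1 n by ring]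
  have h1 : ((B:ℝ)+1) * ((2:ℝ)^(ww B))⁻¹ ≤ 1 := by
    rw [mul_inv_le_iff₀ hw]; linarith
  nlinarith [tp1_pos n]

lemma tq_le_tp1 (n B : ℕ) : tq n B ≤ tp1 n := by
  have := B1_tq n B
  nlinarith [tq_pos n B, Nat.cast_nonneg (α := ℝ) B]

lemma half_tq (n B : ℕ) : (2:ℝ)^(-(qq n B:ℤ)-1) = tq n B / 2 := by
  unfold tq
  rw [zpow_sub₀ (by norm_num : (2:ℝ) ≠ 0)]
  norm_num

end AuxNum

-- AUX2: branch evaluation lemmas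
noncomputable section AuxEval
open Finset

lemma not_inR0 {n i : ℕ} {x : ℝ × ℝ} (hi1 : 1 ≤ i) (ha : (i:ℝ) * tp n ≤ x.1) :
    ¬ inR0 n x := by
  intro hR
  have h2 := hR.2.1
  have hi : (1:ℝ) ≤ (i:ℝ) := by exact_mod_cast hi1
  nlinarith [tp_pos n, tp1_half n]

lemma not_inTop {n i : ℕ} {x : ℝ × ℝ} (hin : i ≤ n) (hb : x.1 ≤ (i:ℝ) * tp n + tp1 n) :
    ¬ inRi n (n+1) x := by
  intro hR
  have h1 := hR.1
  push_cast at h1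
  have hi : (i:ℝ) ≤ (n:ℝ) := by exact_mod_cast hin
  nlinarith [tp_pos n, tp1_half n]

lemma ria_unique {n i i' α : ℕ} {x : ℝ × ℝ}
    (ha : (i:ℝ) * tp n ≤ x.1) (hb : x.1 ≤ (i:ℝ) * tp n + tp1 n)
    (h' : inRia n i' α x) : i' = i := by
  have h1 := h'.1
  have h2 := h'.2.1
  have hlt1 : (i':ℝ) < (i:ℝ) + 1 := by nlinarith [tp_pos n, tp1_half n]
  have hlt2 : (i:ℝ) < (i':ℝ) + 1 := by nlinarith [tp_pos n, tp1_half n]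
  have l1 : i' < i + 1 := by exact_mod_cast hlt1
  have l2 : i < i' + 1 := by exact_mod_cast hlt2
  omega

section EvalCtx
variable {n B : ℕ} {A : ℕ → ℕ} {i : ℕ} {x : ℝ × ℝ}
variable (hi1 : 1 ≤ i) (hin : i ≤ n)
variable (ha : (i:ℝ) * tp n ≤ x.1) (hb : x.1 ≤ (i:ℝ) * tp n + tp1 n)

include hi1 hin ha hb

lemma eval0 (h0 : 0 ≤ x.2) (h1 : x.2 ≤ bI (i:ℤ)) :
    fI n B A x = (x.1 + tp n, 0) := by
  have hR : inRia n i 0 x := ⟨ha, hb, by push_cast; linarith, by push_cast; linarith⟩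
  unfold fI
  rw [if_neg (not_inR0 hi1 ha), if_neg (not_inTop hin hb), dif_pos ⟨i, hi1, hin, hR⟩]

lemma eval1 (h1 : bI (i:ℤ) < x.2) (h2 : x.2 ≤ 2 * bI (i:ℤ)) :
    fI n B A x = (x.1 + tp n, x.2 - bI (i:ℤ)) := by
  have hR : inRia n i 1 x := ⟨ha, hb, by push_cast; linarith, by push_cast; linarith⟩
  have hE : ∃ i', 1 ≤ i' ∧ i' ≤ n ∧ inRia n i' 1 x := ⟨i, hi1, hin, hR⟩
  have hn0 : ¬ ∃ i', 1 ≤ i' ∧ i' ≤ n ∧ inRia n i' 0 x := by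
    rintro ⟨i', -, -, hR'⟩
    rw [ria_unique ha hb hR'] at hR'
    have := hR'.2.2.2
    push_cast at this; linarith
  unfold fI
  rw [if_neg (not_inR0 hi1 ha), if_neg (not_inTop hin hb), dif_neg hn0, dif_pos hE]
  have hc : hE.choose = i := ria_unique ha hb hE.choose_spec.2.2
  rw [hc]

lemma eval2 (h1 : 2 * bI (i:ℤ) < x.2) (h2 : x.2 ≤ 3 * bI (i:ℤ)) :
    fI n B A x = (x.1 + tp n, 3 * bI (i:ℤ) - x.2) := by
  have hR : inRia n i 2 x := ⟨ha, hb, by push_cast; linarith, by push_cast; linarith⟩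
  have hE : ∃ i', 1 ≤ i' ∧ i' ≤ n ∧ inRia n i' 2 x := ⟨i, hi1, hin, hR⟩
  have hn0 : ¬ ∃ i', 1 ≤ i' ∧ i' ≤ n ∧ inRia n i' 0 x := by
    rintro ⟨i', -, -, hR'⟩
    rw [ria_unique ha hb hR'] at hR'
    have := hR'.2.2.2
    push_cast at this; linarith [bI_pos (i:ℤ)]
  have hn1 : ¬ ∃ i', 1 ≤ i' ∧ i' ≤ n ∧ inRia n i' 1 x := by
    rintro ⟨i', -, -, hR'⟩
    rw [ria_unique ha hb hR'] at hR'
    have := hR'.2.2.2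
    push_cast at this; linarith
  unfold fI
  rw [if_neg (not_inR0 hi1 ha), if_neg (not_inTop hin hb), dif_neg hn0, dif_neg hn1,
    dif_pos hE]
  have hc : hE.choose = i := ria_unique ha hb hE.choose_spec.2.2
  rw [hc]

lemma eval3 (h1 : 3 * bI (i:ℤ) < x.2) (h2 : x.2 ≤ 4 * bI (i:ℤ)) :
    ∃ x1', ((i:ℝ)+1) * tp n ≤ x1' ∧ x1' ≤ ((i:ℝ)+1) * tp n + tp1 n ∧
      fI n B A x = (x1', 0) := by
  have hR : inRia n i 3 x := ⟨ha, hb, by push_cast; linarith, by push_cast; linarith⟩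
  have hn0 : ¬ ∃ i', 1 ≤ i' ∧ i' ≤ n ∧ inRia n i' 0 x := by
    rintro ⟨i', -, -, hR'⟩
    rw [ria_unique ha hb hR'] at hR'
    have := hR'.2.2.2
    push_cast at this; linarith [bI_pos (i:ℤ)]
  have hn1 : ¬ ∃ i', 1 ≤ i' ∧ i' ≤ n ∧ inRia n i' 1 x := by
    rintro ⟨i', -, -, hR'⟩
    rw [ria_unique ha hb hR'] at hR'
    have := hR'.2.2.2
    push_cast at this; linarith [bI_pos (i:ℤ)]
  have hn2 : ¬ ∃ i', 1 ≤ i' ∧ i' ≤ n ∧ inRia n i' 2 x := by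
    rintro ⟨i', -, -, hR'⟩
    rw [ria_unique ha hb hR'] at hR'
    have := hR'.2.2.2
    push_cast at this; linarith
  -- θ bounds
  have hθ0 : 0 ≤ x.2 * (5:ℝ)^(i:ℤ) - 3 := by
    have hm := mul_lt_mul_of_pos_right h1 (pow5_pos (i:ℤ))
    have hmp := bI_mul_pow (i:ℤ)
    nlinarith
  have hθ1 : x.2 * (5:ℝ)^(i:ℤ) - 3 ≤ 1 := by
    have hm := mul_le_mul_of_nonneg_right h2 (pow5_pos (i:ℤ)).le
    have hmp := bI_mul_pow (i:ℤ)
    nlinarith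
  by_cases hL : (x.2 * (5:ℝ)^(i:ℤ) - 3) * (tp1 n - ((B:ℝ) + 1 - (A i:ℝ)) * tq n B) ≤
      tp1 n + (i:ℝ) * tp n - x.1
  · -- 3lin branch
    have hE : ∃ i', 1 ≤ i' ∧ i' ≤ n ∧ in3lin n B A i' x := ⟨i, hi1, hin, hR, hL⟩
    refine ⟨x.1 + tp n + (A i:ℝ) * tq n B * (x.2 * (5:ℝ)^(i:ℤ) - 3), ?_, ?_, ?_⟩
    · have : 0 ≤ (A i:ℝ) * tq n B * (x.2 * (5:ℝ)^(i:ℤ) - 3) :=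
        mul_nonneg (mul_nonneg (Nat.cast_nonneg _) (tq_pos n B).le) hθ0
      linarith
    · have hkey : (A i:ℝ) * tq n B * (x.2 * (5:ℝ)^(i:ℤ) - 3) ≤
          (x.2 * (5:ℝ)^(i:ℤ) - 3) * (tp1 n - ((B:ℝ) + 1 - (A i:ℝ)) * tq n B) := by
        have h2' : 0 ≤ (x.2 * (5:ℝ)^(i:ℤ) - 3) * (tp1 n - ((B:ℝ)+1) * tq n B) :=
          mul_nonneg hθ0 (by linarith [B1_tq n B])
        nlinarith
      linarith
    · unfold fI
      rw [if_neg (not_inR0 hi1 ha), if_neg (not_inTop hin hb), dif_neg hn0, dif_neg hn1,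
        dif_neg hn2, dif_pos hE]
      have hc : hE.choose = i := ria_unique ha hb hE.choose_spec.2.2.1
      rw [hc]
  · -- 3sat branch
    have hS : in3sat n B A i x := ⟨hR, (not_le.mp hL).le⟩
    have hE : ∃ i', 1 ≤ i' ∧ i' ≤ n ∧ in3sat n B A i' x := ⟨i, hi1, hin, hS⟩
    have hn3 : ¬ ∃ i', 1 ≤ i' ∧ i' ≤ n ∧ in3lin n B A i' x := by
      rintro ⟨i', -, -, hR'⟩
      obtain rfl := ria_unique ha hb hR'.1
      exact hL hR'.2
    have hcnn : 0 ≤ tp1 n - ((B:ℝ)+1) * tq n B := by linarith [B1_tq n B]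
    refine ⟨((i:ℝ) + 3/2) * tp n -
        (x.2 * (5:ℝ)^(i:ℤ) - 3) * (tp1 n - ((B:ℝ)+1) * tq n B), ?_, ?_, ?_⟩
    · have hle : (x.2 * (5:ℝ)^(i:ℤ) - 3) * (tp1 n - ((B:ℝ)+1) * tq n B) ≤
          tp1 n - ((B:ℝ)+1) * tq n B := by nlinarith
      have : ((B:ℝ)+1) * tq n B ≥ 0 :=
        mul_nonneg (by positivity) (tq_pos n B).le
      have := tp1_half n
      nlinarith [tp_pos n]
    · have hge : 0 ≤ (x.2 * (5:ℝ)^(i:ℤ) - 3) * (tp1 n - ((B:ℝ)+1) * tq n B) :=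
        mul_nonneg hθ0 hcnn
      have := tp1_half n
      nlinarith [tp_pos n]
    · unfold fI
      rw [if_neg (not_inR0 hi1 ha), if_neg (not_inTop hin hb), dif_neg hn0, dif_neg hn1,
        dif_neg hn2, dif_neg hn3, dif_pos hE]
      have hc : hE.choose = i := ria_unique ha hb hE.choose_spec.2.2.1
      rw [hc]

lemma eval4lin (h1 : 4 * bI (i:ℤ) < x.2) (h2 : x.2 ≤ 5 * bI (i:ℤ))
    (hc : x.1 ≤ (i:ℝ) * tp n + ((B:ℝ) + 1 - (A i:ℝ)) * tq n B) :
    fI n B A x = (x.1 + tp n + (A i:ℝ) * tq n B, x.2 - 4 * bI (i:ℤ)) := by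
  have hR : inRia n i 4 x := ⟨ha, hb, by push_cast; linarith, by push_cast; linarith⟩
  have hE : ∃ i', 1 ≤ i' ∧ i' ≤ n ∧ in4lin n B A i' x := ⟨i, hi1, hin, hR, hc⟩
  have hn0 : ¬ ∃ i', 1 ≤ i' ∧ i' ≤ n ∧ inRia n i' 0 x := by
    rintro ⟨i', -, -, hR'⟩
    rw [ria_unique ha hb hR'] at hR'
    have := hR'.2.2.2
    push_cast at this; linarith [bI_pos (i:ℤ)]
  have hn1 : ¬ ∃ i', 1 ≤ i' ∧ i' ≤ n ∧ inRia n i' 1 x := by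
    rintro ⟨i', -, -, hR'⟩
    rw [ria_unique ha hb hR'] at hR'
    have := hR'.2.2.2
    push_cast at this; linarith [bI_pos (i:ℤ)]
  have hn2 : ¬ ∃ i', 1 ≤ i' ∧ i' ≤ n ∧ inRia n i' 2 x := by
    rintro ⟨i', -, -, hR'⟩
    rw [ria_unique ha hb hR'] at hR'
    have := hR'.2.2.2
    push_cast at this; linarith [bI_pos (i:ℤ)]
  have hn3l : ¬ ∃ i', 1 ≤ i' ∧ i' ≤ n ∧ in3lin n B A i' x := by
    rintro ⟨i', -, -, hR'⟩
    rw [ria_unique ha hb hR'.1] at hR'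
    have := hR'.1.2.2.2
    push_cast at this; linarith
  have hn3s : ¬ ∃ i', 1 ≤ i' ∧ i' ≤ n ∧ in3sat n B A i' x := by
    rintro ⟨i', -, -, hR'⟩
    rw [ria_unique ha hb hR'.1] at hR'
    have := hR'.1.2.2.2
    push_cast at this; linarith
  unfold fI
  rw [if_neg (not_inR0 hi1 ha), if_neg (not_inTop hin hb), dif_neg hn0, dif_neg hn1,
    dif_neg hn2, dif_neg hn3l, dif_neg hn3s, dif_pos hE]
  have hcc : hE.choose = i := ria_unique ha hb hE.choose_spec.2.2.1
  rw [hcc]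

lemma eval4sat (h1 : 4 * bI (i:ℤ) < x.2) (h2 : x.2 ≤ 5 * bI (i:ℤ))
    (hc : (i:ℝ) * tp n + ((B:ℝ) + 1 - (A i:ℝ)) * tq n B < x.1) :
    fI n B A x = (((i:ℝ)+1) * tp n + ((B:ℝ)+1) * tq n B, x.2 - 4 * bI (i:ℤ)) := by
  have hR : inRia n i 4 x := ⟨ha, hb, by push_cast; linarith, by push_cast; linarith⟩
  have hE : ∃ i', 1 ≤ i' ∧ i' ≤ n ∧ in4sat n B A i' x := ⟨i, hi1, hin, hR, hc.le⟩
  have hn0 : ¬ ∃ i', 1 ≤ i' ∧ i' ≤ n ∧ inRia n i' 0 x := by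
    rintro ⟨i', -, -, hR'⟩
    rw [ria_unique ha hb hR'] at hR'
    have := hR'.2.2.2
    push_cast at this; linarith [bI_pos (i:ℤ)]
  have hn1 : ¬ ∃ i', 1 ≤ i' ∧ i' ≤ n ∧ inRia n i' 1 x := by
    rintro ⟨i', -, -, hR'⟩
    rw [ria_unique ha hb hR'] at hR'
    have := hR'.2.2.2
    push_cast at this; linarith [bI_pos (i:ℤ)]
  have hn2 : ¬ ∃ i', 1 ≤ i' ∧ i' ≤ n ∧ inRia n i' 2 x := by
    rintro ⟨i', -, -, hR'⟩
    rw [ria_unique ha hb hR'] at hR'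
    have := hR'.2.2.2
    push_cast at this; linarith [bI_pos (i:ℤ)]
  have hn3l : ¬ ∃ i', 1 ≤ i' ∧ i' ≤ n ∧ in3lin n B A i' x := by
    rintro ⟨i', -, -, hR'⟩
    rw [ria_unique ha hb hR'.1] at hR'
    have := hR'.1.2.2.2
    push_cast at this; linarith
  have hn3s : ¬ ∃ i', 1 ≤ i' ∧ i' ≤ n ∧ in3sat n B A i' x := by
    rintro ⟨i', -, -, hR'⟩
    rw [ria_unique ha hb hR'.1] at hR'
    have := hR'.1.2.2.2
    push_cast at this; linarith
  have hn4l : ¬ ∃ i', 1 ≤ i' ∧ i' ≤ n ∧ in4lin n B A i' x := by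
    rintro ⟨i', -, -, hR'⟩
    rw [ria_unique ha hb hR'.1] at hR'
    exact absurd hR'.2 (not_le.mpr hc)
  unfold fI
  rw [if_neg (not_inR0 hi1 ha), if_neg (not_inTop hin hb), dif_neg hn0, dif_neg hn1,
    dif_neg hn2, dif_neg hn3l, dif_neg hn3s, dif_neg hn4l, dif_pos hE]
  have hcc : hE.choose = i := ria_unique ha hb hE.choose_spec.2.2.1
  rw [hcc]

end EvalCtx

lemma eval_fix {n B : ℕ} {A : ℕ → ℕ} {x : ℝ × ℝ}
    (ha : ((n:ℝ)+1) * tp n ≤ x.1) (hb : x.1 ≤ ((n:ℝ)+1) * tp n + tp1 n)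
    (h0 : 0 ≤ x.2) (h1 : x.2 ≤ bI (n:ℤ)) : fI n B A x = x := by
  have hnR0 : ¬ inR0 n x := by
    intro hR
    have := hR.2.1
    nlinarith [tp_pos n, tp1_half n, Nat.cast_nonneg (α := ℝ) n]
  have hT : inRi n (n+1) x := by
    refine ⟨by push_cast; linarith, by push_cast; linarith, h0, ?_⟩
    have he : ((n+1:ℕ):ℤ) - 1 = (n:ℤ) := by push_cast; ring
    rw [he]; exact h1
  unfold fI
  rw [if_neg hnR0, if_pos hT]

end AuxEval

-- AUX3: Vc, sums, absorb, growth
noncomputable section AuxMain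
open Finset

def Vc (B : ℕ) (A : ℕ → ℕ) (ε : ℕ → ℕ) : ℕ → ℕ
  | 0 => 0
  | m+1 => min (B + 1) (Vc B A ε m + ε (m+1) * A (m+1))

lemma Vc_le (B : ℕ) (A ε : ℕ → ℕ) (m : ℕ) : Vc B A ε m ≤ B + 1 := by
  cases m with
  | zero => simp [Vc]
  | succ m => simp [Vc]

lemma Vc_congr (B : ℕ) (A ε ε' : ℕ → ℕ) (m : ℕ) (h : ∀ j, j ≤ m → ε j = ε' j) :
    Vc B A ε m = Vc B A ε' m := by
  induction m with
  | zero => rfl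
  | succ m ih =>
    show min (B+1) (Vc B A ε m + ε (m+1) * A (m+1)) =
      min (B+1) (Vc B A ε' m + ε' (m+1) * A (m+1))
    rw [ih (fun j hj => h j (by omega)), h (m+1) le_rfl]

lemma Vc_sum (B : ℕ) (A ε : ℕ → ℕ) (m : ℕ) (h : Vc B A ε m ≤ B) :
    Vc B A ε m = ∑ j ∈ Icc 1 m, ε j * A j := by
  induction m with
  | zero => simp [Vc]
  | succ m ih =>
    have h' : Vc B A ε (m+1) = min (B+1) (Vc B A ε m + ε (m+1) * A (m+1)) := rfl
    have hle : Vc B A ε m + ε (m+1) * A (m+1) ≤ B := by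
      rw [h'] at h; omega
    have hm : Vc B A ε m ≤ B := by omega
    rw [Finset.sum_Icc_succ_top (by omega : 1 ≤ m + 1), ← ih hm, h']
    omega

-- sum of digits bound:  ∑_{j ∈ Icc L U} (3 ε j + 1) bI j ≤ 5 bI L - bI U
lemma digit_sum_le (ε : ℕ → ℕ) (hε : ∀ j, ε j ≤ 1) :
    ∀ U L : ℕ, L ≤ U + 1 →
      ∑ j ∈ Icc L U, ((3 * ε j + 1 : ℕ) : ℝ) * bI (j:ℤ) ≤ 5 * bI (L:ℤ) - bI (U:ℤ) := by
  intro U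
  induction U with
  | zero =>
    intro L hL
    interval_cases L
    · rw [show Icc 0 0 = {0} by rfl, Finset.sum_singleton]
      have h4 : ((3 * ε 0 + 1 : ℕ) : ℝ) ≤ 4 := by
        have := hε 0; exact_mod_cast by omega
      have hb0 : bI ((0:ℕ):ℤ) = 1 := by norm_num [bI]
      rw [hb0]; linarith
    · rw [show Icc 1 0 = (∅ : Finset ℕ) from Finset.Icc_eq_empty (by omega), Finset.sum_empty]
      have hst : bI ((0:ℕ):ℤ) = 5 * bI ((1:ℕ):ℤ) := by
        have := bI_step ((0:ℕ):ℤ); rw [this]; norm_num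
      rw [hst]; push_cast; linarith [bI_pos ((1:ℕ):ℤ)]
  | succ U ih =>
    intro L hL
    rcases Nat.lt_or_ge L (U+2) with hL2 | hL2
    · rcases Nat.lt_or_ge L (U+1) with hL3 | hL3
      · have h1 := ih L (by omega)
        rw [Finset.sum_Icc_succ_top (by omega : L ≤ U + 1)]
        have h4 : ((3 * ε (U+1) + 1 : ℕ) : ℝ) ≤ 4 := by
          have := hε (U+1); exact_mod_cast by omega
        have hst : bI (U:ℤ) = 5 * bI ((U:ℤ)+1) := bI_step (U:ℤ)
        have hc : ((U+1:ℕ):ℤ) = (U:ℤ)+1 := by push_cast; ring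
        rw [hc]
        nlinarith [bI_pos ((U:ℤ)+1)]
      · -- L = U+1 : single term
        have hL4 : L = U + 1 := by omega
        subst hL4
        rw [Finset.sum_Icc_succ_top (le_refl (U+1)),
          show Icc (U+1) U = (∅ : Finset ℕ) from Finset.Icc_eq_empty (by omega),
          Finset.sum_empty]
        have h4 : ((3 * ε (U+1) + 1 : ℕ) : ℝ) ≤ 4 := by
          have := hε (U+1); exact_mod_cast by omega
        have hc : ((U+1:ℕ):ℤ) = (U:ℤ)+1 := by push_cast; ring
        rw [hc]
        nlinarith [bI_pos ((U:ℤ)+1)]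
    · -- L = U+2 : empty
      have hL4 : L = U + 2 := by omega
      subst hL4
      rw [show Icc (U+2) (U+1) = (∅ : Finset ℕ) from Finset.Icc_eq_empty (by omega),
        Finset.sum_empty]
      have hst : bI ((U+1:ℕ):ℤ) = 5 * bI (((U+2:ℕ)):ℤ) := by
        rw [bI_step ((U+1:ℕ):ℤ), show ((U+1:ℕ):ℤ)+1 = ((U+2:ℕ):ℤ) by push_cast; ring]
      rw [hst]
      have := bI_pos (((U+2:ℕ)):ℤ)
      linarith

lemma absorb (n B : ℕ) (A : ℕ → ℕ) :
    ∀ (r i : ℕ), 1 ≤ i → i ≤ n + 1 → ∀ x1 : ℝ,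
      (i:ℝ) * tp n ≤ x1 → x1 ≤ (i:ℝ) * tp n + tp1 n →
      ((fI n B A)^[r] (x1, 0)).2 = 0 := by
  intro r
  induction r with
  | zero => intros; rfl
  | succ r ih =>
    intro i hi1 hi2 x1 ha hb
    rw [Function.iterate_succ_apply]
    rcases Nat.lt_or_ge i (n+1) with hlt | hge
    · have hin : i ≤ n := by omega
      have he : fI n B A (x1, 0) = ((x1, (0:ℝ)).1 + tp n, 0) :=
        eval0 hi1 hin ha hb le_rfl (bI_pos (i:ℤ)).le
      rw [he]
      exact ih (i+1) (by omega) (by omega) (x1 + tp n)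
        (by push_cast; linarith) (by push_cast; linarith)
    · have hi : i = n + 1 := by omega
      subst hi
      have he : fI n B A (x1, 0) = (x1, 0) := by
        refine eval_fix ?_ ?_ le_rfl (bI_pos (n:ℤ)).le
        · push_cast at ha ⊢; linarith
        · push_cast at hb ⊢; linarith
      rw [he]
      exact ih (n+1) (by omega) (by omega) x1 ha hb

lemma fI_step_bound (n B : ℕ) (A : ℕ → ℕ) (hA : ∀ j, A j ≤ B) (x : ℝ × ℝ) (m : ℕ)
    (hz : x.1 ≤ (m:ℝ) * tp n + tp1 n) :
    (fI n B A x).1 ≤ ((m:ℝ)+1) * tp n + tp1 n := by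
  have hm0 : (0:ℝ) ≤ (m:ℝ) := Nat.cast_nonneg m
  have htp := tp_pos n
  have htp1 := tp1_half n
  have hcm_of : ∀ c : ℕ, (c:ℝ) * tp n ≤ x.1 → (c:ℝ) ≤ (m:ℝ) := by
    intro c hac
    have h1 : (c:ℝ) < (m:ℝ) + 1 := by nlinarith
    exact_mod_cast Nat.lt_succ_iff.mp (by exact_mod_cast h1)
  unfold fI
  by_cases c1 : inR0 n x
  · rw [if_pos c1]; simp only; nlinarith
  rw [if_neg c1]
  by_cases c2 : inRi n (n+1) x
  · rw [if_pos c2]; nlinarith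
  rw [if_neg c2]
  by_cases c3 : ∃ i, 1 ≤ i ∧ i ≤ n ∧ inRia n i 0 x
  · rw [dif_pos c3]; simp only; nlinarith
  rw [dif_neg c3]
  by_cases c4 : ∃ i, 1 ≤ i ∧ i ≤ n ∧ inRia n i 1 x
  · rw [dif_pos c4]; simp only; nlinarith
  rw [dif_neg c4]
  by_cases c5 : ∃ i, 1 ≤ i ∧ i ≤ n ∧ inRia n i 2 x
  · rw [dif_pos c5]; simp only; nlinarith
  rw [dif_neg c5]
  by_cases c6 : ∃ i, 1 ≤ i ∧ i ≤ n ∧ in3lin n B A i x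
  · rw [dif_pos c6]
    simp only
    obtain ⟨hc1, hc2, hlin⟩ := c6.choose_spec
    set c := c6.choose with hcdef
    have hac : (c:ℝ) * tp n ≤ x.1 := hlin.1.1
    have hcm : (c:ℝ) ≤ (m:ℝ) := hcm_of c hac
    have hθ0 : 0 ≤ x.2 * (5:ℝ)^(c:ℤ) - 3 := by
      have h3' := hlin.1.2.2.1
      push_cast at h3'
      have hm' := mul_le_mul_of_nonneg_right h3' (pow5_pos (c:ℤ)).le
      have hmp := bI_mul_pow (c:ℤ)
      nlinarith
    have hkey : (A c:ℝ) * tq n B * (x.2 * (5:ℝ)^(c:ℤ) - 3) ≤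
        (x.2 * (5:ℝ)^(c:ℤ) - 3) * (tp1 n - ((B:ℝ) + 1 - (A c:ℝ)) * tq n B) := by
      have h2' : 0 ≤ (x.2 * (5:ℝ)^(c:ℤ) - 3) * (tp1 n - ((B:ℝ)+1) * tq n B) :=
        mul_nonneg hθ0 (by linarith [B1_tq n B])
      nlinarith
    have hup := hlin.2
    nlinarith
  rw [dif_neg c6]
  by_cases c7 : ∃ i, 1 ≤ i ∧ i ≤ n ∧ in3sat n B A i x
  · rw [dif_pos c7]
    simp only
    obtain ⟨hc1, hc2, hsat⟩ := c7.choose_spec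
    set c := c7.choose with hcdef
    have hac : (c:ℝ) * tp n ≤ x.1 := hsat.1.1
    have hcm : (c:ℝ) ≤ (m:ℝ) := hcm_of c hac
    have hθ0 : 0 ≤ x.2 * (5:ℝ)^(c:ℤ) - 3 := by
      have h3' := hsat.1.2.2.1
      push_cast at h3'
      have hm' := mul_le_mul_of_nonneg_right h3' (pow5_pos (c:ℤ)).le
      have hmp := bI_mul_pow (c:ℤ)
      nlinarith
    have hge : 0 ≤ (x.2 * (5:ℝ)^(c:ℤ) - 3) * (tp1 n - ((B:ℝ)+1) * tq n B) :=
      mul_nonneg hθ0 (by linarith [B1_tq n B])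
    nlinarith
  rw [dif_neg c7]
  by_cases c8 : ∃ i, 1 ≤ i ∧ i ≤ n ∧ in4lin n B A i x
  · rw [dif_pos c8]
    simp only
    obtain ⟨hc1, hc2, hl⟩ := c8.choose_spec
    set c := c8.choose with hcdef
    have hac : (c:ℝ) * tp n ≤ x.1 := hl.1.1
    have hcm : (c:ℝ) ≤ (m:ℝ) := hcm_of c hac
    have hup := hl.2
    have hB1 := B1_tq n B
    have hAc : (A c:ℝ) ≤ (B:ℝ) := by exact_mod_cast hA c
    have htq := tq_pos n B
    nlinarith
  rw [dif_neg c8]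
  by_cases c9 : ∃ i, 1 ≤ i ∧ i ≤ n ∧ in4sat n B A i x
  · rw [dif_pos c9]
    simp only
    obtain ⟨hc1, hc2, hs⟩ := c9.choose_spec
    set c := c9.choose with hcdef
    have hac : (c:ℝ) * tp n ≤ x.1 := hs.1.1
    have hcm : (c:ℝ) ≤ (m:ℝ) := hcm_of c hac
    have hB1 := B1_tq n B
    nlinarith
  rw [dif_neg c9]
  nlinarith

end AuxMain

set_option maxHeartbeats 2000000 in
open Finset in
theorem backward_forward_identity (n B : ℕ) (A : ℕ → ℕ) (hA : ∀ j, A j ≤ B)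
    (x y : ℝ × ℝ) (k : ℕ) (hx : inRfin n B x) (hy : inR0 n y)
    (h : (fI n B A)^[k] y = x) :
    ∃ ε : ℕ → ℕ, (∀ j, ε j ≤ 1) ∧ (∑ i ∈ Finset.Icc 1 n, ε i * A i) = B ∧
      inRfin n B ((fI n B A)^[k] (enc n B (1, 0, ε))) := by
  obtain ⟨hx1a, hx1b, hx2a, hx2b⟩ := hx
  have htp := tp_pos n
  have htp1 := tp1_half n
  have htq := tq_pos n B
  have hB1 := B1_tq n B
  have hhalf := half_tq n B
  -- growth bound on the orbit of y
  have hgrow : ∀ m : ℕ, ((fI n B A)^[m] y).1 ≤ (m:ℝ) * tp n + tp1 n := by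
    intro m
    induction m with
    | zero => simpa using hy.2.1
    | succ m ih =>
      rw [Function.iterate_succ_apply']
      have := fI_step_bound n B A hA _ m ih
      push_cast
      linarith
  -- k is at least n+1
  have hk : n + 1 ≤ k := by
    by_contra hk
    push_neg at hk
    have hkn : (k:ℝ) ≤ (n:ℝ) := by exact_mod_cast Nat.lt_succ_iff.mp hk
    have h1 := hgrow k
    rw [h] at h1
    have hBnn : 0 ≤ (B:ℝ) * tq n B := mul_nonneg (Nat.cast_nonneg B) htq.le
    rw [hhalf] at hx1a
    nlinarith [tq_le_tp1 n B, mul_le_mul_of_nonneg_right hkn htp.le]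
  -- backward induction along the orbit
  have key : ∀ m, m ≤ n → ∃ ε : ℕ → ℕ, (∀ j, ε j ≤ 1) ∧
      ((fI n B A)^[m+1] y).1 = ((m+1:ℕ):ℝ) * tp n + ((Vc B A ε m : ℕ):ℝ) * tq n B ∧
      0 ≤ ((fI n B A)^[m+1] y).2 ∧
      ((fI n B A)^[m+1] y).2 ≤ 5 * bI (((m+1:ℕ)):ℤ) := by
    intro m
    induction m with
    | zero =>
      intro h0n
      have h1 : (fI n B A)^[0+1] y = (tp n, y.2) := by
        rw [Function.iterate_one]
        unfold fI
        rw [if_pos hy]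
      refine ⟨fun _ => 0, fun _ => Nat.zero_le 1, ?_, ?_, ?_⟩
      · rw [h1]
        show tp n = ((0+1:ℕ):ℝ) * tp n + ((Vc B A (fun _ => 0) 0 : ℕ):ℝ) * tq n B
        have hv0 : Vc B A (fun _ => 0) 0 = 0 := rfl
        rw [hv0]
        norm_num
      · rw [h1]; exact hy.2.2.1
      · rw [h1]
        show y.2 ≤ 5 * bI ((0+1:ℕ):ℤ)
        have hb1 : bI ((0+1:ℕ):ℤ) = 1/5 := by norm_num [bI]
        rw [hb1]
        linarith [hy.2.2.2]
    | succ m ih =>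
      intro hm1
      obtain ⟨ε, hε, h1, h20, h25⟩ := ih (by omega)
      set z : ℝ × ℝ := (fI n B A)^[m+1] y with hzdef
      have hznext : (fI n B A)^[m+1+1] y = fI n B A z := Function.iterate_succ_apply' _ _ _
      have hvle : Vc B A ε m ≤ B + 1 := Vc_le B A ε m
      have hvleR : ((Vc B A ε m : ℕ):ℝ) ≤ (B:ℝ) + 1 := by exact_mod_cast hvle
      have hvnn : (0:ℝ) ≤ ((Vc B A ε m : ℕ):ℝ) := Nat.cast_nonneg _
      have ha : ((m+1:ℕ):ℝ) * tp n ≤ z.1 := by rw [h1]; nlinarith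
      have hb : z.1 ≤ ((m+1:ℕ):ℝ) * tp n + tp1 n := by
        rw [h1]
        nlinarith [mul_le_mul_of_nonneg_right hvleR htq.le]
      have hi1 : 1 ≤ m + 1 := by omega
      have hin : m + 1 ≤ n := hm1
      have hst : bI ((m+1:ℕ):ℤ) = 5 * bI ((m+1+1:ℕ):ℤ) := by
        rw [bI_step ((m+1:ℕ):ℤ), show ((m+1:ℕ):ℤ)+1 = ((m+1+1:ℕ):ℤ) by push_cast; ring]
      have habs : ∀ w : ℝ × ℝ, (fI n B A)^[m+1+1] y = w → w.2 = 0 →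
          ((m+1+1:ℕ):ℝ) * tp n ≤ w.1 → w.1 ≤ ((m+1+1:ℕ):ℝ) * tp n + tp1 n → False := by
        intro w hw hw2 hwa hwb
        have hweq : w = (w.1, (0:ℝ)) := by rw [← hw2]
        have hx2 : x.2 = 0 := by
          rw [← h, show k = (k - (m+1+1)) + (m+1+1) by omega,
            Function.iterate_add_apply, hw, hweq]
          exact absorb n B A (k - (m+1+1)) (m+1+1) (by omega) (by omega) w.1 hwa hwb
        linarith [bI_pos ((n:ℤ)+1)]
      rcases le_or_gt z.2 (bI ((m+1:ℕ):ℤ)) with hc1 | hc1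
      · exfalso
        have hstep : fI n B A z = (z.1 + tp n, 0) := eval0 hi1 hin ha hb h20 hc1
        refine habs (z.1 + tp n, 0) (by rw [hznext, hstep]) rfl ?_ ?_
        · push_cast at ha ⊢; linarith
        · push_cast at hb ⊢; linarith
      · rcases le_or_gt z.2 (2 * bI ((m+1:ℕ):ℤ)) with hc2 | hc2
        · -- α = 1, digit 0
          have hstep : fI n B A z = (z.1 + tp n, z.2 - bI ((m+1:ℕ):ℤ)) :=
            eval1 hi1 hin ha hb hc1 hc2
          have e1 : ((fI n B A)^[m+1+1] y).1 = z.1 + tp n := by rw [hznext, hstep]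
          have e2 : ((fI n B A)^[m+1+1] y).2 = z.2 - bI ((m+1:ℕ):ℤ) := by rw [hznext, hstep]
          refine ⟨Function.update ε (m+1) 0, ?_, ?_, ?_, ?_⟩
          · intro j
            rcases eq_or_ne j (m+1) with rfl | hj
            · simp
            · rw [Function.update_of_ne hj]; exact hε j
          · rw [e1, h1]
            have hVc : Vc B A (Function.update ε (m+1) 0) (m+1) = Vc B A ε m := by
              show min (B+1) (Vc B A (Function.update ε (m+1) 0) m +
                (Function.update ε (m+1) 0) (m+1) * A (m+1)) = _
              rw [Vc_congr B A (Function.update ε (m+1) 0) ε m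
                (fun j hj => Function.update_of_ne (by omega) _ _), Function.update_self]
              simp
              omega
            rw [hVc]
            push_cast
            ring
          · rw [e2]; linarith
          · rw [e2]; linarith [bI_pos ((m+1:ℕ):ℤ)]
        · rcases le_or_gt z.2 (3 * bI ((m+1:ℕ):ℤ)) with hc3 | hc3
          · -- α = 2, digit 0
            have hstep : fI n B A z = (z.1 + tp n, 3 * bI ((m+1:ℕ):ℤ) - z.2) :=
              eval2 hi1 hin ha hb hc2 hc3
            have e1 : ((fI n B A)^[m+1+1] y).1 = z.1 + tp n := by rw [hznext, hstep]
            have e2 : ((fI n B A)^[m+1+1] y).2 = 3 * bI ((m+1:ℕ):ℤ) - z.2 := by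
              rw [hznext, hstep]
            refine ⟨Function.update ε (m+1) 0, ?_, ?_, ?_, ?_⟩
            · intro j
              rcases eq_or_ne j (m+1) with rfl | hj
              · simp
              · rw [Function.update_of_ne hj]; exact hε j
            · rw [e1, h1]
              have hVc : Vc B A (Function.update ε (m+1) 0) (m+1) = Vc B A ε m := by
                show min (B+1) (Vc B A (Function.update ε (m+1) 0) m +
                  (Function.update ε (m+1) 0) (m+1) * A (m+1)) = _
                rw [Vc_congr B A (Function.update ε (m+1) 0) ε m
                  (fun j hj => Function.update_of_ne (by omega) _ _), Function.update_self]
                simp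
                omega
              rw [hVc]
              push_cast
              ring
            · rw [e2]; linarith
            · rw [e2]; linarith [bI_pos ((m+1:ℕ):ℤ)]
          · rcases le_or_gt z.2 (4 * bI ((m+1:ℕ):ℤ)) with hc4 | hc4
            · -- α = 3, absorbing
              exfalso
              obtain ⟨x1', hx1'a, hx1'b, hstep⟩ := eval3 hi1 hin ha hb hc3 hc4
              refine habs (x1', 0) (by rw [hznext, hstep]) rfl ?_ ?_
              · push_cast at hx1'a ⊢; linarith
              · push_cast at hx1'b ⊢; linarith
            · -- α = 4, digit 1
              rcases Nat.lt_or_ge (B + 1) (Vc B A ε m + A (m+1)) with hgt | hle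
              · -- saturated
                have hcond : ((m+1:ℕ):ℝ) * tp n + ((B:ℝ) + 1 - (A (m+1):ℝ)) * tq n B < z.1 := by
                  rw [h1]
                  have : (B:ℝ) + 1 - (A (m+1):ℝ) < ((Vc B A ε m : ℕ):ℝ) := by
                    have : (B:ℝ) + 1 < ((Vc B A ε m : ℕ):ℝ) + (A (m+1):ℝ) := by
                      exact_mod_cast hgt
                    linarith
                  nlinarith
                have hstep : fI n B A z = ((((m+1:ℕ):ℝ)+1) * tp n + ((B:ℝ)+1) * tq n B,
                    z.2 - 4 * bI ((m+1:ℕ):ℤ)) := eval4sat hi1 hin ha hb hc4 h25 hcond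
                have e1 : ((fI n B A)^[m+1+1] y).1 =
                    (((m+1:ℕ):ℝ)+1) * tp n + ((B:ℝ)+1) * tq n B := by rw [hznext, hstep]
                have e2 : ((fI n B A)^[m+1+1] y).2 = z.2 - 4 * bI ((m+1:ℕ):ℤ) := by
                  rw [hznext, hstep]
                refine ⟨Function.update ε (m+1) 1, ?_, ?_, ?_, ?_⟩
                · intro j
                  rcases eq_or_ne j (m+1) with rfl | hj
                  · simp
                  · rw [Function.update_of_ne hj]; exact hε j
                · rw [e1]
                  have hVc : Vc B A (Function.update ε (m+1) 1) (m+1) = B + 1 := by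
                    show min (B+1) (Vc B A (Function.update ε (m+1) 1) m +
                      (Function.update ε (m+1) 1) (m+1) * A (m+1)) = _
                    rw [Vc_congr B A (Function.update ε (m+1) 1) ε m
                      (fun j hj => Function.update_of_ne (by omega) _ _), Function.update_self]
                    omega
                  rw [hVc]
                  push_cast
                  ring
                · rw [e2]; linarith
                · rw [e2]; linarith [bI_pos ((m+1:ℕ):ℤ)]
              · -- linear
                have hcond : z.1 ≤ ((m+1:ℕ):ℝ) * tp n + ((B:ℝ) + 1 - (A (m+1):ℝ)) * tq n B := by
                  rw [h1]
                  have : ((Vc B A ε m : ℕ):ℝ) ≤ (B:ℝ) + 1 - (A (m+1):ℝ) := by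
                    have : ((Vc B A ε m : ℕ):ℝ) + (A (m+1):ℝ) ≤ (B:ℝ) + 1 := by
                      exact_mod_cast hle
                    linarith
                  nlinarith
                have hstep : fI n B A z = (z.1 + tp n + (A (m+1):ℝ) * tq n B,
                    z.2 - 4 * bI ((m+1:ℕ):ℤ)) := eval4lin hi1 hin ha hb hc4 h25 hcond
                have e1 : ((fI n B A)^[m+1+1] y).1 = z.1 + tp n + (A (m+1):ℝ) * tq n B := by
                  rw [hznext, hstep]
                have e2 : ((fI n B A)^[m+1+1] y).2 = z.2 - 4 * bI ((m+1:ℕ):ℤ) := by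
                  rw [hznext, hstep]
                refine ⟨Function.update ε (m+1) 1, ?_, ?_, ?_, ?_⟩
                · intro j
                  rcases eq_or_ne j (m+1) with rfl | hj
                  · simp
                  · rw [Function.update_of_ne hj]; exact hε j
                · rw [e1, h1]
                  have hVc : Vc B A (Function.update ε (m+1) 1) (m+1) =
                      Vc B A ε m + A (m+1) := by
                    show min (B+1) (Vc B A (Function.update ε (m+1) 1) m +
                      (Function.update ε (m+1) 1) (m+1) * A (m+1)) = _
                    rw [Vc_congr B A (Function.update ε (m+1) 1) ε m
                      (fun j hj => Function.update_of_ne (by omega) _ _), Function.update_self]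
                    omega
                  rw [hVc]
                  push_cast
                  ring
                · rw [e2]; linarith
                · rw [e2]; linarith [bI_pos ((m+1:ℕ):ℤ)]
  -- extract ε from the backward induction at m = n
  obtain ⟨ε, hε, hform, hs0, hs5⟩ := key n le_rfl
  have hbn : 5 * bI ((n+1:ℕ):ℤ) = bI (n:ℤ) := by
    rw [bI_step (n:ℤ), show (n:ℤ)+1 = ((n+1:ℕ):ℤ) by push_cast; ring]
  have hvle : Vc B A ε n ≤ B + 1 := Vc_le B A ε n
  have hvleR : ((Vc B A ε n : ℕ):ℝ) ≤ (B:ℝ) + 1 := by exact_mod_cast hvle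
  have hvnn : (0:ℝ) ≤ ((Vc B A ε n : ℕ):ℝ) := Nat.cast_nonneg _
  have hzfix : fI n B A ((fI n B A)^[n+1] y) = (fI n B A)^[n+1] y := by
    refine eval_fix ?_ ?_ hs0 ?_
    · rw [hform]; push_cast; nlinarith
    · rw [hform]; push_cast; nlinarith [mul_le_mul_of_nonneg_right hvleR htq.le]
    · rw [← hbn]; linarith [hs5, bI_pos ((n+1:ℕ):ℤ)]
  have hxz : x = (fI n B A)^[n+1] y := by
    rw [← h, show k = (k-(n+1))+(n+1) by omega, Function.iterate_add_apply]
    exact Function.iterate_fixed hzfix _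
  have hVB : Vc B A ε n = B := by
    have hx1 : x.1 = ((n+1:ℕ):ℝ) * tp n + ((Vc B A ε n : ℕ):ℝ) * tq n B := by
      rw [hxz]; exact hform
    rw [hx1] at hx1a hx1b
    rw [hhalf] at hx1a
    push_cast at hx1a hx1b
    have hle : Vc B A ε n ≤ B := by
      have h2 : ((Vc B A ε n : ℕ):ℝ) * tq n B ≤ (B:ℝ) * tq n B := by linarith
      have := (mul_le_mul_iff_of_pos_right htq).mp h2
      exact_mod_cast this
    have hge : B < Vc B A ε n + 1 := by
      have h2 : ((B:ℝ) - 1/2) * tq n B ≤ ((Vc B A ε n : ℕ):ℝ) * tq n B := by linarith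
      have h3 := (mul_le_mul_iff_of_pos_right htq).mp h2
      have : (B:ℝ) < ((Vc B A ε n : ℕ):ℝ) + 1 := by linarith
      exact_mod_cast this
    omega
  have hsum : ∑ i ∈ Finset.Icc 1 n, ε i * A i = B := by
    rw [← Vc_sum B A ε n (le_of_eq hVB)]
    exact hVB
  refine ⟨ε, hε, hsum, ?_⟩
  -- forward simulation
  have hfwd : ∀ m, m ≤ n → (fI n B A)^[m] (enc n B (1, 0, ε)) =
      (((m+1:ℕ):ℝ) * tp n + ((∑ j ∈ Icc 1 m, ε j * A j : ℕ):ℝ) * tq n B,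
       bI ((n:ℤ)+1) + ∑ j ∈ Icc (m+1) n, ((3 * ε j + 1 : ℕ):ℝ) * bI (j:ℤ)) := by
    intro m
    induction m with
    | zero =>
      intro h0n
      rw [Function.iterate_zero_apply]
      unfold enc
      simp
    | succ m ihf =>
      intro hm1
      have ih := ihf (by omega)
      set S : ℕ := ∑ j ∈ Icc 1 m, ε j * A j with hSdef
      have hSB : S ≤ B := by
        rw [← hsum]
        exact Finset.sum_le_sum_of_subset (Finset.Icc_subset_Icc_right (by omega))
      have hSB' : S + ε (m+1) * A (m+1) ≤ B := by
        have : S + ε (m+1) * A (m+1) = ∑ j ∈ Icc 1 (m+1), ε j * A j := by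
          rw [Finset.sum_Icc_succ_top (by omega : 1 ≤ m+1)]
        rw [this, ← hsum]
        exact Finset.sum_le_sum_of_subset (Finset.Icc_subset_Icc_right (by omega))
      have hsplit : ∑ j ∈ Icc (m+1) n, ((3 * ε j + 1 : ℕ):ℝ) * bI (j:ℤ) =
          ((3 * ε (m+1) + 1 : ℕ):ℝ) * bI ((m+1:ℕ):ℤ) +
          ∑ j ∈ Icc (m+1+1) n, ((3 * ε j + 1 : ℕ):ℝ) * bI (j:ℤ) := by
        rw [← Finset.Ioc_insert_left hm1, Finset.sum_insert Finset.left_notMem_Ioc,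
          ← Finset.Icc_add_one_left_eq_Ioc]
      set T : ℝ := bI ((n:ℤ)+1) + ∑ j ∈ Icc (m+1+1) n, ((3 * ε j + 1 : ℕ):ℝ) * bI (j:ℤ)
        with hTdef
      have hT0 : 0 < T := by
        have : (0:ℝ) ≤ ∑ j ∈ Icc (m+1+1) n, ((3 * ε j + 1 : ℕ):ℝ) * bI (j:ℤ) :=
          Finset.sum_nonneg (fun j _ => mul_nonneg (Nat.cast_nonneg _) (bI_pos _).le)
        have := bI_pos ((n:ℤ)+1)
        rw [hTdef]
        linarith
      have hT1 : T ≤ bI ((m+1:ℕ):ℤ) := by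
        have hd := digit_sum_le ε hε n (m+1+1) (by omega)
        have hst : 5 * bI ((m+1+1:ℕ):ℤ) = bI ((m+1:ℕ):ℤ) := by
          rw [bI_step ((m+1:ℕ):ℤ), show ((m+1:ℕ):ℤ)+1 = ((m+1+1:ℕ):ℤ) by push_cast; ring]
        have hstn : bI ((n:ℤ)+1) ≤ bI (n:ℤ) := by
          rw [bI_step (n:ℤ)]; linarith [bI_pos ((n:ℤ)+1)]
        rw [hTdef]
        linarith
      have hstp : bI ((m+1:ℕ):ℤ) = 5 * bI ((m+1+1:ℕ):ℤ) := by
        rw [bI_step ((m+1:ℕ):ℤ), show ((m+1:ℕ):ℤ)+1 = ((m+1+1:ℕ):ℤ) by push_cast; ring]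
      -- strip bounds for the encoded point
      have hSR : ((S:ℕ):ℝ) ≤ (B:ℝ) := by exact_mod_cast hSB
      have ha : ((m+1:ℕ):ℝ) * tp n ≤
          (((m+1:ℕ):ℝ) * tp n + ((S:ℕ):ℝ) * tq n B) := by
        nlinarith [Nat.cast_nonneg (α := ℝ) S]
      have hb : (((m+1:ℕ):ℝ) * tp n + ((S:ℕ):ℝ) * tq n B) ≤
          ((m+1:ℕ):ℝ) * tp n + tp1 n := by
        nlinarith [mul_le_mul_of_nonneg_right hSR htq.le]
      rw [Function.iterate_succ_apply', ih]
      rcases Nat.le_one_iff_eq_zero_or_eq_one.mp (hε (m+1)) with he0 | he1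
      · -- digit 0 : α = 1 strip
        have hz2 : bI ((n:ℤ)+1) + ∑ j ∈ Icc (m+1) n, ((3 * ε j + 1 : ℕ):ℝ) * bI (j:ℤ) =
            bI ((m+1:ℕ):ℤ) + T := by
          rw [hsplit, hTdef, he0]
          push_cast
          ring
        have hstep := eval1 (n := n) (B := B) (A := A) (i := m+1)
          (x := (((m+1:ℕ):ℝ) * tp n + ((S:ℕ):ℝ) * tq n B,
            bI ((n:ℤ)+1) + ∑ j ∈ Icc (m+1) n, ((3 * ε j + 1 : ℕ):ℝ) * bI (j:ℤ)))
          (by omega) hm1 ha hb (by rw [hz2]; simp only; linarith) (by rw [hz2]; simp only; linarith)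
        rw [hstep]
        refine Prod.ext ?_ ?_
        · simp only
          have : ∑ j ∈ Icc 1 (m+1), ε j * A j = S := by
            rw [Finset.sum_Icc_succ_top (by omega : 1 ≤ m+1), he0]
            simp [hSdef]
          rw [this]
          push_cast
          ring
        · simp only
          rw [hz2, hTdef]
          ring
      · -- digit 1 : α = 4 strip
        have hz2 : bI ((n:ℤ)+1) + ∑ j ∈ Icc (m+1) n, ((3 * ε j + 1 : ℕ):ℝ) * bI (j:ℤ) =
            4 * bI ((m+1:ℕ):ℤ) + T := by
          rw [hsplit, hTdef, he1]
          push_cast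
          ring
        have hcond : (((m+1:ℕ):ℝ) * tp n + ((S:ℕ):ℝ) * tq n B) ≤
            ((m+1:ℕ):ℝ) * tp n + ((B:ℝ) + 1 - (A (m+1):ℝ)) * tq n B := by
          have : ((S:ℕ):ℝ) + (A (m+1):ℝ) ≤ (B:ℝ) + 1 := by
            have : S + A (m+1) ≤ B + 1 := by
              have := hSB'
              rw [he1] at this
              omega
            exact_mod_cast this
          nlinarith
        have hstep := eval4lin (n := n) (B := B) (A := A) (i := m+1)
          (x := (((m+1:ℕ):ℝ) * tp n + ((S:ℕ):ℝ) * tq n B,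
            bI ((n:ℤ)+1) + ∑ j ∈ Icc (m+1) n, ((3 * ε j + 1 : ℕ):ℝ) * bI (j:ℤ)))
          (by omega) hm1 ha hb (by rw [hz2]; simp only; linarith) (by rw [hz2]; simp only; linarith)
          hcond
        rw [hstep]
        refine Prod.ext ?_ ?_
        · simp only
          have : ∑ j ∈ Icc 1 (m+1), ε j * A j = S + A (m+1) := by
            rw [Finset.sum_Icc_succ_top (by omega : 1 ≤ m+1), he1]
            simp [hSdef]
          rw [this]
          push_cast
          ring
        · simp only
          rw [hz2, hTdef]
          ring
  -- conclude
  have hfin := hfwd n le_rfl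
  rw [show Icc (n+1) n = (∅ : Finset ℕ) from Finset.Icc_eq_empty (by omega),
    Finset.sum_empty, hsum] at hfin
  have hfixpt : fI n B A (((n+1:ℕ):ℝ) * tp n + ((B:ℕ):ℝ) * tq n B, bI ((n:ℤ)+1) + 0) =
      (((n+1:ℕ):ℝ) * tp n + ((B:ℕ):ℝ) * tq n B, bI ((n:ℤ)+1) + 0) := by
    refine eval_fix ?_ ?_ ?_ ?_
    · simp only
      push_cast
      nlinarith [mul_nonneg (Nat.cast_nonneg (α := ℝ) B) htq.le]
    · simp only
      push_cast
      nlinarith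
    · simp only
      linarith [bI_pos ((n:ℤ)+1)]
    · simp only
      rw [bI_step (n:ℤ)]
      linarith [bI_pos ((n:ℤ)+1)]
  rw [show k = (k-n)+n by omega, Function.iterate_add_apply, hfin,
    Function.iterate_fixed hfixpt]
  refine ⟨?_, ?_, ?_, ?_⟩
  · simp only
    rw [hhalf]
    push_cast
    linarith
  · simp only
    push_cast
    linarith
  · simp only
    linarith [bI_pos ((n:ℤ)+1)]
  · simp only
    linarith [bI_pos ((n:ℤ)+1)]
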